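/- arXiv:2208.01763 — 3 statements merged into one kernel-verified Lean document; each statement's English description precedes it below -/
import Mathlib

section
/- Let R be a commutative Noetherian ring, A a standard graded R-algebra, and φ: R → S a surjective ring homomorphism. Then A ⊗_R S is a standard graded S-algebra and rt_S(A ⊗_R S) ≤ rt_R(A). -/
open MvPolynomial TensorProduct

/-- The ideal generated by the elements of `Q` of total degree at most `ℓ`. -/
noncomputable def Ideal.degLE {σ R : Type*} [CommRing R] (Q : Ideal (MvPolynomial σ R)) (ℓ : ℕ) :
    Ideal (MvPolynomial σ R) :=
  Ideal.span {q | q ∈ Q ∧ q.totalDegree ≤ ℓ}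

/-- The relation type of a presentation ideal `Q`. -/
noncomputable def relTypeKer {σ R : Type*} [CommRing R] (Q : Ideal (MvPolynomial σ R)) : ℕ :=
  sInf {ℓ : ℕ | 1 ≤ ℓ ∧ Q.degLE ℓ = Q}

/-- The relation type `rt_R(A)` with respect to the degree-one generating family `f`. -/
noncomputable def relType (R : Type*) {A : Type*} [CommRing R] [CommRing A] [Algebra R A]
    {ι : Type*} (f : ι → A) : ℕ :=
  relTypeKer (RingHom.ker (MvPolynomial.aeval f : MvPolynomial ι R →ₐ[R] A))


open DirectSum
section

section
variable {R S A : Type*} [CommRing R] [CommRing S] [CommRing A] [Algebra R A] [Algebra R S]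

lemma bc_mono {p q : Submodule R A} (h : p ≤ q) :
    p.baseChange S ≤ q.baseChange S := by
  rw [Submodule.baseChange_eq_span, Submodule.baseChange_eq_span]
  exact Submodule.span_mono (Submodule.map_mono h)

lemma bc_mul (p q : Submodule R A) :
    (p * q).baseChange S = p.baseChange S * q.baseChange S := by
  apply le_antisymm
  · rw [Submodule.baseChange_eq_span, Submodule.span_le]
    rintro - ⟨x, hx, rfl⟩
    refine Submodule.mul_induction_on hx (fun a ha b hb => ?_) (fun a b ha hb => ?_)
    · have : (TensorProduct.mk R S A 1) (a * b) = ((1:S) ⊗ₜ[R] a) * ((1:S) ⊗ₜ[R] b) := by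
        simp [Algebra.TensorProduct.tmul_mul_tmul]
      rw [this]
      exact Submodule.mul_mem_mul (Submodule.tmul_mem_baseChange_of_mem 1 ha)
        (Submodule.tmul_mem_baseChange_of_mem 1 hb)
    · simpa [TensorProduct.tmul_add] using Submodule.add_mem _ ha hb
  · rw [Submodule.mul_le]
    intro u hu v hv
    rw [Submodule.baseChange_eq_span] at hu hv
    induction hu using Submodule.span_induction with
    | mem u hu =>
      obtain ⟨a, ha, rfl⟩ := hu
      induction hv using Submodule.span_induction with
      | mem v hv =>
        obtain ⟨b, hb, rfl⟩ := hv
        have : (TensorProduct.mk R S A 1) a * (TensorProduct.mk R S A 1) b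
            = (TensorProduct.mk R S A 1) (a * b) := by
          simp [Algebra.TensorProduct.tmul_mul_tmul]
        rw [this]
        exact Submodule.tmul_mem_baseChange_of_mem 1 (Submodule.mul_mem_mul ha hb)
      | zero => simpa using Submodule.zero_mem _
      | add x y hx hy ihx ihy => rw [mul_add]; exact Submodule.add_mem _ ihx ihy
      | smul s x hx ih => rw [mul_smul_comm]; exact Submodule.smul_mem _ s ih
    | zero => simpa using Submodule.zero_mem _
    | add x y hx hy ihx ihy => rw [add_mul]; exact Submodule.add_mem _ ihx ihy
    | smul s x hx ih => rw [smul_mul_assoc]; exact Submodule.smul_mem _ s ih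

variable (S) in
/-- componentwise base-change map -/
noncomputable def toBC (p : Submodule R A) : p →ₗ[R] p.baseChange S where
  toFun x := ⟨(1:S) ⊗ₜ[R] (x:A), Submodule.tmul_mem_baseChange_of_mem 1 x.2⟩
  map_add' x y := by ext; simp [TensorProduct.tmul_add]
  map_smul' r x := by ext; simp [TensorProduct.tmul_smul]

variable (S) in
noncomputable def bcL (𝒜 : ℕ → Submodule R A) [GradedAlgebra 𝒜] :
    A →ₗ[R] ⨁ n, ((𝒜 n).baseChange S : Submodule S (S ⊗[R] A)) :=
  (DirectSum.toModule R ℕ _ fun n =>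
      ((DirectSum.lof S ℕ (fun k => ((𝒜 k).baseChange S : Submodule S (S ⊗[R] A))) n).restrictScalars R)
        ∘ₗ toBC S (𝒜 n))
    ∘ₗ (DirectSum.decomposeLinearEquiv 𝒜).toLinearMap

variable (S) in
lemma bcL_of (𝒜 : ℕ → Submodule R A) [GradedAlgebra 𝒜] {n : ℕ} (a : 𝒜 n) :
    bcL S 𝒜 (a : A) = DirectSum.lof S ℕ (fun k => ((𝒜 k).baseChange S : Submodule S (S ⊗[R] A))) n
      (toBC S (𝒜 n) a) := by
  have h1 : (DirectSum.decomposeLinearEquiv 𝒜).toLinearMap (a : A)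
      = DirectSum.lof R ℕ (fun i => (𝒜 i : Submodule R A)) n a := by
    simpa [DirectSum.lof_eq_of] using DirectSum.decompose_coe 𝒜 a
  rw [bcL, LinearMap.comp_apply, h1, DirectSum.toModule_lof]
  rfl

set_option synthInstance.maxHeartbeats 400000 in
variable (S) in
noncomputable def bcD (𝒜 : ℕ → Submodule R A) [GradedAlgebra 𝒜] :
    S ⊗[R] A →ₗ[R] ⨁ n, ((𝒜 n).baseChange S : Submodule S (S ⊗[R] A)) :=
  TensorProduct.lift
    { toFun := fun s => s • (bcL S 𝒜)
      map_add' := fun s t => by rw [add_smul]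
      map_smul' := fun r s => by dsimp only [RingHom.id_apply]; rw [smul_assoc] }

lemma bcD_tmul (𝒜 : ℕ → Submodule R A) [GradedAlgebra 𝒜] (s : S) (a : A) :
    bcD S 𝒜 (s ⊗ₜ[R] a) = s • bcL S 𝒜 a := rfl

set_option synthInstance.maxHeartbeats 400000 in
lemma bcD_smul (𝒜 : ℕ → Submodule R A) [GradedAlgebra 𝒜] (s : S) (x : S ⊗[R] A) :
    bcD S 𝒜 (s • x) = s • bcD S 𝒜 x := by
  induction x with
  | zero => simp
  | tmul t a => rw [smul_tmul', bcD_tmul, bcD_tmul, smul_eq_mul, mul_smul]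
  | add x y hx hy => rw [smul_add, map_add, hx, hy, map_add, smul_add]

lemma coe_bcL (𝒜 : ℕ → Submodule R A) [GradedAlgebra 𝒜] (a : A) :
    (DirectSum.coeLinearMap fun n => ((𝒜 n).baseChange S : Submodule S (S ⊗[R] A)))
      (bcL S 𝒜 a) = (1:S) ⊗ₜ[R] a := by
  induction a using DirectSum.Decomposition.inductionOn 𝒜 with
  | zero => simp
  | @homogeneous n x =>
    rw [bcL_of, DirectSum.lof_eq_of, DirectSum.coeLinearMap_of]
    rfl
  | add x y hx hy => rw [map_add, map_add, hx, hy, TensorProduct.tmul_add]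

lemma bcD_left_inv (𝒜 : ℕ → Submodule R A) [GradedAlgebra 𝒜] (x : S ⊗[R] A) :
    (DirectSum.coeLinearMap fun n => ((𝒜 n).baseChange S : Submodule S (S ⊗[R] A)))
      (bcD S 𝒜 x) = x := by
  induction x with
  | zero => simp
  | tmul s a =>
    rw [bcD_tmul, map_smul, coe_bcL, smul_tmul', smul_eq_mul, mul_one]
  | add x y hx hy => rw [map_add, map_add, hx, hy]

lemma bcD_mem (𝒜 : ℕ → Submodule R A) [GradedAlgebra 𝒜] (n : ℕ) (x : S ⊗[R] A)
    (hx : x ∈ (𝒜 n).baseChange S) :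
    bcD S 𝒜 x = DirectSum.lof S ℕ (fun k => ((𝒜 k).baseChange S : Submodule S (S ⊗[R] A))) n
      ⟨x, hx⟩ := by
  have hx' := hx
  rw [Submodule.baseChange_eq_span] at hx'
  induction hx' using Submodule.span_induction with
  | mem x hx0 =>
    obtain ⟨a, ha, rfl⟩ := hx0
    simp only [TensorProduct.mk_apply]
    rw [bcD_tmul, one_smul, bcL_of S 𝒜 (⟨a, ha⟩ : 𝒜 n)]
    rfl
  | zero =>
    rw [map_zero]
    exact ((congrArg _ (Subtype.ext rfl)).trans
      (map_zero (DirectSum.lof S ℕ (fun k => ((𝒜 k).baseChange S :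
        Submodule S (S ⊗[R] A))) n))).symm
  | add x y hx0 hy ihx ihy =>
    rw [map_add, ihx (by rw [Submodule.baseChange_eq_span]; exact hx0),
      ihy (by rw [Submodule.baseChange_eq_span]; exact hy), ← map_add]
    rfl
  | smul s x hx0 ih =>
    rw [bcD_smul, ih (by rw [Submodule.baseChange_eq_span]; exact hx0), ← map_smul]
    rfl

lemma coeAdd_eq_coeLin {ℬ : ℕ → Submodule S (S ⊗[R] A)} (y : ⨁ n, ℬ n) :
    DirectSum.coeAddMonoidHom ℬ y = DirectSum.coeLinearMap ℬ y := by
  induction y using DirectSum.induction_on with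
  | zero => simp
  | of n x => rw [DirectSum.coeAddMonoidHom_of, DirectSum.coeLinearMap_of]
  | add x y hx hy => rw [map_add, map_add, hx, hy]

variable (S) in
noncomputable def bcGraded (𝒜 : ℕ → Submodule R A) [GradedAlgebra 𝒜] :
    GradedAlgebra (fun n => ((𝒜 n).baseChange S : Submodule S (S ⊗[R] A))) :=
  { one_mem := by
      rw [Algebra.TensorProduct.one_def]
      exact Submodule.tmul_mem_baseChange_of_mem 1 (SetLike.one_mem_graded 𝒜)
    mul_mem := fun {i j} gi gj hi hj => by
      have h : 𝒜 i * 𝒜 j ≤ 𝒜 (i + j) :=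
        Submodule.mul_le.mpr fun a ha b hb => SetLike.mul_mem_graded ha hb
      have h3 := Submodule.mul_mem_mul hi hj
      rw [← bc_mul (S := S) (𝒜 i) (𝒜 j)] at h3
      exact bc_mono (S := S) h h3
    decompose' := fun x => bcD S 𝒜 x
    left_inv := fun x => (coeAdd_eq_coeLin _).trans (bcD_left_inv 𝒜 x)
    right_inv := fun y => by
      rw [coeAdd_eq_coeLin]
      show bcD S 𝒜 _ = y
      induction y using DirectSum.induction_on with
      | zero => simp
      | of n z =>
        rw [DirectSum.coeLinearMap_of, bcD_mem 𝒜 n _ z.2, ← DirectSum.lof_eq_of S]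
      | add x y hx hy => rw [map_add, map_add, hx, hy] }

lemma bc_one : ((1 : Submodule R A).baseChange S) = (1 : Submodule S (S ⊗[R] A)) := by
  rw [Submodule.one_eq_span, Submodule.baseChange_span, Submodule.one_eq_span]
  simp [Set.image_singleton, Algebra.TensorProduct.one_def]

end


/-- Let `R` be a commutative Noetherian ring, `A` a standard graded
`R`-algebra, and `R → S` a surjective ring homomorphism.  Then `A ⊗_R S` is a standard
graded `S`-algebra (with degree-one generators the images `f_i ⊗ 1` of the degree-one
generators `f_i` of `A`) and `rt_S(A ⊗_R S) ≤ rt_R(A)`. -/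
theorem relation_type_statement_3
    {R A S : Type*} [CommRing R] [IsNoetherianRing R] [CommRing A] [Algebra R A]
    [CommRing S] [Algebra R S] (hsurj : Function.Surjective (algebraMap R S))
    (𝒜 : ℕ → Submodule R A) [GradedAlgebra 𝒜]
    (h0 : 𝒜 0 = (1 : Submodule R A)) (hfg : (𝒜 1).FG)
    (hstd : ∀ n : ℕ, 𝒜 (n + 1) = 𝒜 1 * 𝒜 n)
    {m : ℕ} (f : Fin m → A) (hf : Submodule.span R (Set.range f) = 𝒜 1) :
    (∃ ℬ : ℕ → Submodule S (S ⊗[R] A), ∃ _ : GradedAlgebra ℬ,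
        ℬ 0 = (1 : Submodule S (S ⊗[R] A)) ∧ (ℬ 1).FG ∧
        (∀ n : ℕ, ℬ (n + 1) = ℬ 1 * ℬ n) ∧
        Submodule.span S (Set.range fun i : Fin m => ((1 : S) ⊗ₜ[R] f i : S ⊗[R] A)) = ℬ 1)
    ∧ relType S (fun i : Fin m => ((1 : S) ⊗ₜ[R] f i : S ⊗[R] A)) ≤ relType R f := by
  classical
  constructor
  · refine ⟨fun n => ((𝒜 n).baseChange S), bcGraded S 𝒜, ?_, ?_, ?_, ?_⟩
    · show (𝒜 0).baseChange S = 1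
      rw [h0, bc_one]
    · show ((𝒜 1).baseChange S).FG
      rw [← hf, Submodule.baseChange_span]
      exact Submodule.fg_span ((Set.finite_range f).image _)
    · intro n
      show (𝒜 (n+1)).baseChange S = (𝒜 1).baseChange S * (𝒜 n).baseChange S
      rw [hstd n, bc_mul]
    · show _ = (𝒜 1).baseChange S
      rw [← hf, Submodule.baseChange_span]
      congr 1
      rw [← Set.range_comp]
      rfl
  · -- the relation type inequality
    set g : Fin m → S ⊗[R] A := fun i => (1 : S) ⊗ₜ[R] f i with hgdef
    set Q : Ideal (MvPolynomial (Fin m) R) :=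
      RingHom.ker (MvPolynomial.aeval f : MvPolynomial (Fin m) R →ₐ[R] A) with hQdef
    set Q' : Ideal (MvPolynomial (Fin m) S) :=
      RingHom.ker (MvPolynomial.aeval g : MvPolynomial (Fin m) S →ₐ[S] S ⊗[R] A) with hQ'def
    set I : Ideal R := RingHom.ker (algebraMap R S) with hIdef
    -- surjectivity of `aeval f`
    have h1adj : 𝒜 1 ≤ Subalgebra.toSubmodule (Algebra.adjoin R (Set.range f)) := by
      rw [← hf]; exact Submodule.span_le.mpr Algebra.subset_adjoin
    have hadj : ∀ n, 𝒜 n ≤ Subalgebra.toSubmodule (Algebra.adjoin R (Set.range f)) := by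
      intro n
      induction n with
      | zero =>
        rw [h0]
        exact Submodule.one_le.mpr (Subalgebra.one_mem _)
      | succ n ih =>
        rw [hstd n, Submodule.mul_le]
        intro a ha b hb
        exact (Algebra.adjoin R (Set.range f)).mul_mem (h1adj ha) (ih hb)
    have hsurjA : Function.Surjective (MvPolynomial.aeval f : MvPolynomial (Fin m) R →ₐ[R] A) := by
      rw [← AlgHom.range_eq_top, ← Algebra.adjoin_range_eq_range_aeval, eq_top_iff]
      intro a _
      rw [← DirectSum.sum_support_decompose 𝒜 a]
      exact sum_mem fun n _ => hadj n (DirectSum.decompose 𝒜 a n).2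
    -- kernel of `A → S ⊗ A`
    have hker : ∀ x : A, (1 : S) ⊗ₜ[R] x = 0 → x ∈ (I • (⊤ : Submodule R A)) := by
      intro x hx
      have hsurj' : Function.Surjective (Algebra.ofId R S) := hsurj
      let e := Ideal.quotientKerAlgEquivOfSurjective hsurj'
      have h2 : (Ideal.Quotient.mk (RingHom.ker (Algebra.ofId R S)) 1) ⊗ₜ[R] x
          = (0 : (R ⧸ RingHom.ker (Algebra.ofId R S)) ⊗[R] A) := by
        have h3 := congrArg
          (TensorProduct.congr e.symm.toLinearEquiv (LinearEquiv.refl R A)) hx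
        rw [TensorProduct.congr_tmul, map_zero] at h3
        rwa [show e.symm.toLinearEquiv (1 : S)
          = Ideal.Quotient.mk (RingHom.ker (Algebra.ofId R S)) 1 from map_one e.symm,
          LinearEquiv.refl_apply] at h3
      have h4 := congrArg (quotTensorEquivQuotSMul A (RingHom.ker (Algebra.ofId R S))) h2
      rw [quotTensorEquivQuotSMul_mk_tmul, map_zero, one_smul] at h4
      have h5 := (Submodule.Quotient.mk_eq_zero _).mp h4
      exact h5
    -- elements of `I • ⊤` lift to polynomials killed by the base change map
    have hIA : ∀ x ∈ (I • (⊤ : Submodule R A)), ∃ q : MvPolynomial (Fin m) R,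
        MvPolynomial.aeval f q = x ∧ MvPolynomial.map (algebraMap R S) q = 0 := by
      intro x hx
      refine Submodule.smul_induction_on hx ?_ ?_
      · intro r hr a _
        obtain ⟨q, hq⟩ := hsurjA a
        refine ⟨MvPolynomial.C r * q, ?_, ?_⟩
        · rw [map_mul, MvPolynomial.aeval_C, hq, ← Algebra.smul_def]
        · rw [map_mul, MvPolynomial.map_C, show algebraMap R S r = 0 from hr,
            MvPolynomial.C_0, zero_mul]
      · rintro x y ⟨qx, hqx1, hqx2⟩ ⟨qy, hqy1, hqy2⟩
        exact ⟨qx + qy, by rw [map_add, hqx1, hqy1], by rw [map_add, hqx2, hqy2, add_zero]⟩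
    -- the commutative square
    have hcomm : ∀ p : MvPolynomial (Fin m) R,
        MvPolynomial.aeval g (MvPolynomial.map (algebraMap R S) p)
          = (1 : S) ⊗ₜ[R] (MvPolynomial.aeval f p) := by
      intro p
      rw [MvPolynomial.aeval_def, MvPolynomial.eval₂_map, MvPolynomial.aeval_def,
        show ((1 : S) ⊗ₜ[R] (MvPolynomial.eval₂ (algebraMap R A) f p) : S ⊗[R] A)
          = (Algebra.TensorProduct.includeRight : A →ₐ[R] S ⊗[R] A).toRingHom
            (MvPolynomial.eval₂ (algebraMap R A) f p) from rfl,
        MvPolynomial.eval₂_comp_left]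
      have e1 : (algebraMap S (S ⊗[R] A)).comp (algebraMap R S)
          = ((Algebra.TensorProduct.includeRight : A →ₐ[R] S ⊗[R] A) :
              A →+* S ⊗[R] A).comp (algebraMap R A) := by
        rw [← IsScalarTower.algebraMap_eq, AlgHom.comp_algebraMap]
      rw [e1]
      congr 1
    -- Q' is the image of Q
    have hQ'map : Q' = Q.map (MvPolynomial.map (algebraMap R S)) := by
      apply le_antisymm
      · intro p' hp'
        obtain ⟨p, rfl⟩ := MvPolynomial.map_surjective _ hsurj p'
        have h1 : (1 : S) ⊗ₜ[R] (MvPolynomial.aeval f p) = 0 := by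
          rw [← hcomm p]; exact hp'
        obtain ⟨q, hq1, hq2⟩ := hIA _ (hker _ h1)
        have hpq : p - q ∈ Q := by
          rw [hQdef, RingHom.mem_ker, map_sub, hq1, sub_self]
        have h6 := Ideal.mem_map_of_mem (MvPolynomial.map (algebraMap R S)) hpq
        rwa [map_sub, hq2, sub_zero] at h6
      · rw [Ideal.map_le_iff_le_comap]
        intro p hp
        have hp0 : MvPolynomial.aeval f p = 0 := hp
        show MvPolynomial.map (algebraMap R S) p ∈ Q'
        rw [hQ'def, RingHom.mem_ker, hcomm p, hp0, TensorProduct.tmul_zero]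
    -- map does not increase total degree
    have hmapdeg : ∀ q : MvPolynomial (Fin m) R,
        (MvPolynomial.map (algebraMap R S) q).totalDegree ≤ q.totalDegree := by
      intro q
      rw [MvPolynomial.totalDegree, MvPolynomial.totalDegree]
      exact Finset.sup_mono (MvPolynomial.support_map_subset _ _)
    -- degree bound transfers
    have hsub : ∀ ℓ, (1 ≤ ℓ ∧ Q.degLE ℓ = Q) → (1 ≤ ℓ ∧ Q'.degLE ℓ = Q') := by
      rintro ℓ ⟨h1, h2⟩
      have key : Q.map (MvPolynomial.map (algebraMap R S)) ≤ Q'.degLE ℓ := by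
        rw [← h2, show Q.degLE ℓ = Ideal.span {q | q ∈ Q ∧ q.totalDegree ≤ ℓ} from rfl,
          Ideal.map_span]
        refine Ideal.span_le.mpr ?_
        rintro - ⟨q, ⟨hqQ, hqd⟩, rfl⟩
        refine Ideal.subset_span ⟨?_, le_trans (hmapdeg q) hqd⟩
        rw [hQ'map]
        exact Ideal.mem_map_of_mem _ hqQ
      exact ⟨h1, le_antisymm (Ideal.span_le.mpr fun q hq => hq.1)
        (le_of_eq_of_le hQ'map key)⟩
    -- the set for Q is nonempty (Noetherianity)
    obtain ⟨t, ht⟩ : Q.FG := IsNoetherian.noetherian Q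
    have hmem : (max 1 (t.sup MvPolynomial.totalDegree)) ∈ {ℓ | 1 ≤ ℓ ∧ Q.degLE ℓ = Q} := by
      refine ⟨le_max_left _ _, le_antisymm (Ideal.span_le.mpr fun q hq => hq.1) ?_⟩
      rw [← ht]
      refine Ideal.span_le.mpr fun q hq => Ideal.subset_span ⟨?_, ?_⟩
      · exact Ideal.subset_span hq
      · exact le_trans (Finset.le_sup hq) (le_max_right _ _)
    show relTypeKer Q' ≤ relTypeKer Q
    exact Nat.sInf_le (hsub _ (Nat.sInf_mem ⟨_, hmem⟩))

end
end

section
/- Let S = R[x_1,…,x_n] be a polynomial ring over a commutative Noetherian ring R, let d ≥ 1, and let A = R[Mon^d(S)] be the standard graded R-algebra generated by all N = binom(d+n−1, n−1) monomials of degree d in S, placed in degree 1. Then the kernel Q of the polynomial presentation R[T_1,…,T_N] → A (sending T_i to the i-th degree-d monomial in lexicographic order) equals the ideal I_2(M) of 2×2 minors of the n × binom(d+n−2, n−1) matrix M whose (i,j)-entry is the variable T_k with φ(T_k) = x_i m_j, where m_1,…,m_r are the degree-(d−1) monomials in lexicographic order; in particular rt_R(A) = 2 (for data where Q ≠ 0,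 e.g. n ≥ 2 and d ≥ 2). -/
open MvPolynomial

/-- Index type for the monomials of degree `d` in `n` variables: the set `Mon^d(S)`.
(Its cardinality is `binom (d+n-1) (n-1)`.) -/
def MonIdx (n d : ℕ) : Type :=
  {v : Fin n →₀ ℕ // (v.sum fun _ e => e) = d}

/-- The family of all monomials of degree `d` in `S = R[x_1,…,x_n]`, generating the
Veronese algebra `A = R[Mon^d(S)]`. -/
noncomputable def monGen (R : Type*) [CommRing R] (n d : ℕ) :
    MonIdx n d → MvPolynomial (Fin n) R :=
  fun v => MvPolynomial.monomial v.1 (1 : R)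

/-- The `n × binom (d+n-2) (n-1)` matrix `M` whose `(i,j)` entry is the variable `T_k`
corresponding to the degree-`d` monomial `x_i · m_j`, where `m_j` runs over the
monomials of degree `d - 1`. -/
noncomputable def monMatrix (R : Type*) [CommRing R] (n d : ℕ) (hd : 1 ≤ d) :
    Matrix (Fin n) (MonIdx n (d - 1)) (MvPolynomial (MonIdx n d) R) :=
  fun i w => MvPolynomial.X ⟨w.1 + Finsupp.single i 1, by
    have h1 : ((w.1 + Finsupp.single i 1).sum fun _ e => e)
        = (w.1.sum fun _ e => e) + ((Finsupp.single i 1).sum fun _ e => e) :=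
      Finsupp.sum_add_index' (fun _ => rfl) (fun _ _ _ => rfl)
    rw [h1, w.2, Finsupp.sum_single_index rfl]
    omega⟩

/-- The ideal `I_2(M)` of `2 × 2` minors of a matrix `M`. -/
def minors2 {α β S : Type*} [CommRing S] (M : Matrix α β S) : Ideal S :=
  Ideal.span {p | ∃ i k j l, p = M i j * M k l - M i l * M k j}

namespace Ver

section dg
variable {α : Type*}

noncomputable def dg (u : α →₀ ℕ) : ℕ := u.sum fun _ e => e

@[simp] lemma dg_zero : dg (0 : α →₀ ℕ) = 0 := Finsupp.sum_zero_index

lemma dg_add (u u' : α →₀ ℕ) : dg (u + u') = dg u + dg u' :=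
  Finsupp.sum_add_index' (fun _ => rfl) (fun _ _ _ => rfl)

@[simp] lemma dg_single (a : α) (e : ℕ) : dg (Finsupp.single a e) = e :=
  Finsupp.sum_single_index rfl

lemma dg_smul (e : ℕ) (u : α →₀ ℕ) : dg (e • u) = e * dg u := by
  induction e with
  | zero => simp
  | succ e ih => rw [succ_nsmul, dg_add, ih]; ring

lemma dg_eq_zero' {u : α →₀ ℕ} (h : dg u = 0) : u = 0 := by
  ext a
  by_cases ha : u a = 0
  · simpa using ha
  · exfalso
    have h1 : u a ≤ dg u := Finset.single_le_sum (f := fun a => u a)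
      (fun _ _ => Nat.zero_le _) (Finsupp.mem_support_iff.mpr ha)
    omega

lemma eq_of_le_of_dg_eq {f g : α →₀ ℕ} (h : f ≤ g) (hdg : dg f = dg g) : f = g := by
  have h1 : f + (g - f) = g := add_tsub_cancel_of_le h
  have h2 := congrArg dg h1
  rw [dg_add] at h2
  have h3 : g - f = 0 := dg_eq_zero' (by omega)
  rw [← h1, h3, add_zero]

lemma exists_single_add {u : α →₀ ℕ} {a : α} (ha : u a ≠ 0) :
    Finsupp.single a 1 + (u - Finsupp.single a 1) = u :=
  add_tsub_cancel_of_le (Finsupp.single_le_iff.mpr (Nat.one_le_iff_ne_zero.mpr ha))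

lemma exists_apply_ne_zero {u : α →₀ ℕ} (h : u ≠ 0) : ∃ a, u a ≠ 0 := by
  by_contra hc
  push_neg at hc
  exact h (Finsupp.ext fun a => hc a)

end dg

section wt

variable {n d : ℕ}

noncomputable def wt (u : MonIdx n d →₀ ℕ) : Fin n →₀ ℕ := u.sum fun v e => e • v.1

@[simp] lemma wt_zero : wt (0 : MonIdx n d →₀ ℕ) = 0 := Finsupp.sum_zero_index

lemma wt_add (u u' : MonIdx n d →₀ ℕ) : wt (u + u') = wt u + wt u' :=
  Finsupp.sum_add_index' (fun _ => zero_smul _ _) (fun _ b₁ b₂ => add_smul b₁ b₂ _)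

@[simp] lemma wt_single (v : MonIdx n d) (e : ℕ) : wt (Finsupp.single v e) = e • v.1 :=
  Finsupp.sum_single_index (zero_smul _ _)

lemma dg_wt (u : MonIdx n d →₀ ℕ) : dg (wt u) = d * dg u := by
  induction u using Finsupp.induction with
  | zero => simp
  | single_add v e u _ _ ih =>
    rw [wt_add, dg_add, dg_add, wt_single, dg_single, ih, dg_smul, dg, v.2]; ring

lemma wt_apply (u : MonIdx n d →₀ ℕ) (i : Fin n) :
    wt u i = u.sum fun v e => e * v.1 i := by
  rw [wt, Finsupp.sum_apply]
  simp [Finsupp.smul_apply]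

lemma exists_of_wt_apply_ne {u : MonIdx n d →₀ ℕ} {i : Fin n} (h : wt u i ≠ 0) :
    ∃ b, u b ≠ 0 ∧ b.1 i ≠ 0 := by
  by_contra hc
  push_neg at hc
  apply h
  rw [wt_apply, Finsupp.sum]
  exact Finset.sum_eq_zero fun b hb => by
    rw [hc b (Finsupp.mem_support_iff.mp hb), mul_zero]

lemma aeval_monGen_monomial {R : Type*} [CommRing R] (u : MonIdx n d →₀ ℕ) (c : R) :
    aeval (monGen R n d) (monomial u c) = monomial (wt u) c := by
  rw [aeval_monomial]
  have h : (u.prod fun v e => monGen R n d v ^ e) = monomial (wt u) (1 : R) := by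
    induction u using Finsupp.induction with
    | zero => simp
    | single_add v e u hvu he ih =>
      rw [Finsupp.prod_add_index' (fun _ => pow_zero _) (fun _ _ _ => pow_add _ _ _), ih]
      simp only [monGen]
      have hs := Finsupp.prod_single_index (M := ℕ) (N := MvPolynomial (Fin n) R) (a := v)
        (b := e) (h := fun (x : MonIdx n d) (k : ℕ) => (monomial x.1 (1:R)) ^ k) (pow_zero _)
      rw [hs]
      simp only [monomial_pow, one_pow]
      rw [monomial_mul, wt_add, wt_single, one_mul]
  rw [h, algebraMap_eq, C_mul_monomial, mul_one]

end wt

section exch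

variable {n d : ℕ}

lemma single_le_of_ne {a : MonIdx n d} {i : Fin n} (hi : a.1 i ≠ 0) :
    Finsupp.single i 1 ≤ a.1 :=
  Finsupp.single_le_iff.mpr (Nat.one_le_iff_ne_zero.mpr hi)

lemma sub_single_add (a : MonIdx n d) (i : Fin n) (hi : a.1 i ≠ 0) :
    a.1 - Finsupp.single i 1 + Finsupp.single i 1 = a.1 :=
  tsub_add_cancel_of_le (single_le_of_ne hi)

noncomputable def aDiv (a : MonIdx n d) (i : Fin n) (hi : a.1 i ≠ 0) : MonIdx n (d - 1) :=
  ⟨a.1 - Finsupp.single i 1, by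
    show dg _ = d - 1
    have h := congrArg dg (sub_single_add a i hi)
    rw [dg_add, dg_single] at h
    have h2 : dg a.1 = d := a.2
    omega⟩

noncomputable def mv (a : MonIdx n d) (i k : Fin n) (hi : a.1 i ≠ 0) : MonIdx n d :=
  ⟨a.1 - Finsupp.single i 1 + Finsupp.single k 1, by
    have hd' : 1 ≤ d := Nat.one_le_iff_ne_zero.mpr (by
      intro h0; subst h0
      exact hi (by rw [dg_eq_zero' (u := a.1) a.2]; rfl))
    show dg _ = d
    rw [dg_add, dg_single]
    have h4 : dg (a.1 - Finsupp.single i 1) = d - 1 := (aDiv a i hi).2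
    omega⟩

lemma mv_apply (a : MonIdx n d) (i k : Fin n) (hi : a.1 i ≠ 0) (j : Fin n) :
    (mv a i k hi).1 j = a.1 j - (if i = j then 1 else 0) + (if k = j then 1 else 0) := by
  show ((a.1 - Finsupp.single i 1 + Finsupp.single k 1 : Fin n →₀ ℕ)) j = _
  rw [Finsupp.add_apply, Finsupp.tsub_apply, Finsupp.single_apply, Finsupp.single_apply]

variable {R : Type*} [CommRing R] (hd : 1 ≤ d)

lemma monMatrix_aDiv (a : MonIdx n d) (i : Fin n) (hi : a.1 i ≠ 0) :
    monMatrix R n d hd i (aDiv a i hi) = X a := by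
  unfold monMatrix
  congr 1
  exact Subtype.ext (sub_single_add a i hi)

lemma monMatrix_aDiv' (a : MonIdx n d) (i k : Fin n) (hi : a.1 i ≠ 0) :
    monMatrix R n d hd k (aDiv a i hi) = X (mv a i k hi) := rfl

lemma exchange_mem (a b : MonIdx n d) (i k : Fin n) (hi : a.1 i ≠ 0) (hk : b.1 k ≠ 0) :
    (X a * X b - X (mv a i k hi) * X (mv b k i hk) : MvPolynomial (MonIdx n d) R)
      ∈ minors2 (monMatrix R n d hd) := by
  have h : (monMatrix R n d hd i (aDiv a i hi) * monMatrix R n d hd k (aDiv b k hk)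
      - monMatrix R n d hd i (aDiv b k hk) * monMatrix R n d hd k (aDiv a i hi))
      ∈ minors2 (monMatrix R n d hd) :=
    Ideal.subset_span ⟨i, k, aDiv a i hi, aDiv b k hk, rfl⟩
  rw [monMatrix_aDiv, monMatrix_aDiv, monMatrix_aDiv', monMatrix_aDiv'] at h
  convert h using 2
  ring

lemma X_mul_monomial (v : MonIdx n d) (u : MonIdx n d →₀ ℕ) :
    (X v : MvPolynomial (MonIdx n d) R) * monomial u 1
      = monomial (Finsupp.single v 1 + u) 1 := by
  rw [X, monomial_mul, one_mul]

/-- Pull-out lemma: modulo the 2×2 minors, any monomial whose weight dominates `v`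
is congruent to `X v` times a smaller monomial. -/
lemma pullB : ∀ (δ : ℕ) (v a : MonIdx n d) (u : MonIdx n d →₀ ℕ),
    dg (v.1 - a.1) = δ → u a ≠ 0 → v.1 ≤ wt u →
    ∃ u', wt u' + v.1 = wt u ∧
      (monomial u (1:R) - X v * monomial u' 1) ∈ minors2 (monMatrix R n d hd) := by
  intro δ
  induction δ using Nat.strong_induction_on with
  | _ δ IH =>
  intro v a u hδ ha hle
  by_cases hva : v.1 ≤ a.1
  · -- then a = v
    have hav : a = v := Subtype.ext (eq_of_le_of_dg_eq hva (v.2.trans a.2.symm)).symm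
    subst hav
    refine ⟨u - Finsupp.single a 1, ?_, ?_⟩
    · have h1 := congrArg wt (exists_single_add ha)
      rw [wt_add, wt_single, one_smul] at h1
      rw [← h1, add_comm]
    · rw [X_mul_monomial, exists_single_add ha, sub_self]
      exact Ideal.zero_mem _
  · -- exchange step
    rw [Finsupp.le_def] at hva
    push_neg at hva
    obtain ⟨i, hia⟩ := hva
    have hk : ∃ k, v.1 k < a.1 k := by
      by_contra hc
      push_neg at hc
      have h5 : a.1 = v.1 := eq_of_le_of_dg_eq (Finsupp.le_def.mpr hc) (a.2.trans v.2.symm)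
      rw [h5] at hia
      exact lt_irrefl _ hia
    obtain ⟨k, hka⟩ := hk
    have hik : i ≠ k := by intro h; subst h; omega
    have hak : a.1 k ≠ 0 := by omega
    set u₁ := u - Finsupp.single a 1 with hu₁
    have hu : Finsupp.single a 1 + u₁ = u := exists_single_add ha
    have hwtu : wt u = a.1 + wt u₁ := by
      rw [← hu, wt_add, wt_single, one_smul]
    have hwti : wt u₁ i ≠ 0 := by
      have h1 : v.1 i ≤ wt u i := hle i
      have h2 : wt u i = a.1 i + wt u₁ i := by rw [hwtu]; rfl
      omega
    obtain ⟨b, hb, hbi⟩ := exists_of_wt_apply_ne hwti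
    set r := u₁ - Finsupp.single b 1 with hr
    have hru : Finsupp.single b 1 + r = u₁ := exists_single_add hb
    set a' := mv a k i hak with ha'
    set b' := mv b i k hbi with hb'
    set u₂ := Finsupp.single a' 1 + Finsupp.single b' 1 + r with hu₂
    have hak1 : 1 ≤ a.1 k := Nat.one_le_iff_ne_zero.mpr hak
    have hbi1 : 1 ≤ b.1 i := Nat.one_le_iff_ne_zero.mpr hbi
    have habsum : a'.1 + b'.1 = a.1 + b.1 := by
      ext j
      rw [Finsupp.add_apply, Finsupp.add_apply, mv_apply, mv_apply]
      split_ifs with h3 h4 h4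
      · exact absurd (h4.trans h3.symm) hik
      · subst h3; omega
      · subst h4; omega
      · omega
    have hwt₂ : wt u₂ = wt u := by
      rw [hu₂, wt_add, wt_add, wt_single, wt_single, one_smul, one_smul, hwtu, ← hru,
        wt_add, wt_single, one_smul]
      rw [← add_assoc, habsum]
    -- the exchange relation
    have hxch : (monomial u (1:R) - monomial u₂ 1) ∈ minors2 (monMatrix R n d hd) := by
      have hmem := exchange_mem (R := R) hd a b k i hak hbi
      have e1 : r + (Finsupp.single a 1 + Finsupp.single b 1) = u := by
        rw [← hu, ← hru]; abel
      have e2 : r + (Finsupp.single a' 1 + Finsupp.single b' 1) = u₂ := by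
        rw [hu₂]; abel
      have hXX : (X a * X b : MvPolynomial (MonIdx n d) R)
          = monomial (Finsupp.single a 1 + Finsupp.single b 1) 1 := by
        rw [X, X, monomial_mul, one_mul]
      have hXX' : (X a' * X b' : MvPolynomial (MonIdx n d) R)
          = monomial (Finsupp.single a' 1 + Finsupp.single b' 1) 1 := by
        rw [X, X, monomial_mul, one_mul]
      have heq : (monomial u (1:R) - monomial u₂ 1)
          = monomial r 1 * (X a * X b - X a' * X b') := by
        rw [mul_sub, hXX, hXX', monomial_mul, monomial_mul, one_mul, e1, e2]
      rw [heq]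
      exact Ideal.mul_mem_left _ _ hmem
    -- measure decreases
    have hmeas : dg (v.1 - a'.1) + 1 = δ := by
      have hstep : (v.1 - a'.1) + Finsupp.single i 1 = v.1 - a.1 := by
        ext j
        rw [Finsupp.add_apply, Finsupp.tsub_apply, Finsupp.tsub_apply, mv_apply,
          Finsupp.single_apply]
        split_ifs with h3 h4 h4
        · exact absurd (h4.trans h3.symm) hik
        · subst h3; omega
        · subst h4; omega
        · omega
      have := congrArg dg hstep
      rw [dg_add, dg_single, hδ] at this
      exact this
    have hu₂a' : u₂ a' ≠ 0 := by
      have h1 : u₂ a' = 1 + (Finsupp.single b' 1) a' + r a' := by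
        rw [hu₂, Finsupp.add_apply, Finsupp.add_apply, Finsupp.single_eq_same]
      omega
    have hle₂ : v.1 ≤ wt u₂ := hwt₂ ▸ hle
    obtain ⟨u', h1, h2⟩ := IH (dg (v.1 - a'.1)) (by omega) v a' u₂ rfl hu₂a' hle₂
    refine ⟨u', by rw [h1, hwt₂], ?_⟩
    have : monomial u (1:R) - X v * monomial u' 1
        = (monomial u 1 - monomial u₂ 1) + (monomial u₂ 1 - X v * monomial u' 1) := by ring
    rw [this]
    exact Ideal.add_mem _ hxch h2

lemma binomial_mem : ∀ (m : ℕ) (u u' : MonIdx n d →₀ ℕ), dg u = m → wt u = wt u' →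
    (monomial u (1:R) - monomial u' 1) ∈ minors2 (monMatrix R n d hd) := by
  intro m
  induction m with
  | zero =>
    intro u u' h0 hw
    have hu : u = 0 := dg_eq_zero' h0
    have hdgu' : d * dg u' = 0 := by
      rw [← dg_wt, ← hw, hu, wt_zero, dg_zero]
    have hu' : u' = 0 := dg_eq_zero' (by
      rcases Nat.mul_eq_zero.mp hdgu' with h | h
      · omega
      · exact h)
    rw [hu, hu', sub_self]
    exact Ideal.zero_mem _
  | succ m ih =>
    intro u u' hdg hw
    have hu'dg : dg u' = m + 1 := by
      have h1 := dg_wt u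
      have h2 := dg_wt u'
      rw [hw] at h1
      rw [hdg] at h1
      have := h1.symm.trans h2
      exact (Nat.eq_of_mul_eq_mul_left (show 0 < d by omega) this).symm
    obtain ⟨v, hv⟩ : ∃ v, u v ≠ 0 := by
      apply exists_apply_ne_zero
      intro h0
      rw [h0, dg_zero] at hdg
      omega
    obtain ⟨a, ha⟩ : ∃ a, u' a ≠ 0 := by
      apply exists_apply_ne_zero
      intro h0
      rw [h0, dg_zero] at hu'dg
      omega
    set um := u - Finsupp.single v 1 with hum
    have hu : Finsupp.single v 1 + um = u := exists_single_add hv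
    have hwtu : wt u = v.1 + wt um := by rw [← hu, wt_add, wt_single, one_smul]
    have hle : v.1 ≤ wt u' := by rw [← hw, hwtu]; exact le_self_add
    obtain ⟨u'', hwt'', hmem''⟩ := pullB (R := R) hd (dg (v.1 - a.1)) v a u' rfl ha hle
    have hwteq : wt um = wt u'' := by
      rw [← hw] at hwt''
      rw [hwtu, add_comm] at hwt''
      exact (add_left_cancel hwt'').symm
    have hdgm : dg um = m := by
      have := congrArg dg hu
      rw [dg_add, dg_single, hdg] at this
      omega
    have h1 := ih um u'' hdgm hwteq
    have hXu : X v * monomial um (1:R) = monomial u 1 := by rw [X_mul_monomial, hu]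
    have hsplit : monomial u (1:R) - monomial u' 1
        = X v * (monomial um 1 - monomial u'' 1) - (monomial u' 1 - X v * monomial u'' 1) := by
      rw [mul_sub, hXu]; ring
    rw [hsplit]
    exact Ideal.sub_mem _ (Ideal.mul_mem_left _ _ h1) hmem''

lemma aeval_monMatrix (i : Fin n) (w : MonIdx n (d-1)) :
    aeval (monGen R n d) (monMatrix R n d hd i w)
      = monomial (w.1 + Finsupp.single i 1) (1:R) := by
  unfold monMatrix
  exact aeval_X _ _

lemma minors_le_ker :
    minors2 (monMatrix R n d hd)
      ≤ RingHom.ker (aeval (monGen R n d) : MvPolynomial (MonIdx n d) R →ₐ[R] _) := by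
  rw [minors2, Ideal.span_le]
  rintro p ⟨i, k, j, l, rfl⟩
  rw [SetLike.mem_coe, RingHom.mem_ker, map_sub, map_mul, map_mul,
    aeval_monMatrix, aeval_monMatrix, aeval_monMatrix, aeval_monMatrix,
    monomial_mul, monomial_mul, one_mul]
  rw [show (j.1 + Finsupp.single i 1) + (l.1 + Finsupp.single k 1)
      = (l.1 + Finsupp.single i 1) + (j.1 + Finsupp.single k 1) by abel]
  exact sub_self _

lemma ker_le_minors : ∀ (N : ℕ) (p : MvPolynomial (MonIdx n d) R), p.support.card ≤ N →
    aeval (monGen R n d) p = 0 → p ∈ minors2 (monMatrix R n d hd) := by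
  intro N
  induction N with
  | zero =>
    intro p hcard _
    have : p.support = ∅ := Finset.card_eq_zero.mp (Nat.le_zero.mp hcard)
    rw [support_eq_empty.mp this]
    exact Ideal.zero_mem _
  | succ N IH =>
    intro p hcard hker
    by_cases hp : p = 0
    · rw [hp]; exact Ideal.zero_mem _
    obtain ⟨u0, hu0⟩ : ∃ u0, u0 ∈ p.support := by
      by_contra hc
      push_neg at hc
      exact hp (support_eq_empty.mp (Finset.eq_empty_iff_forall_notMem.mpr hc))
    classical
    set t := wt u0 with ht
    set F := p.support.filter (fun u => wt u = t) with hF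
    set F' := p.support.filter (fun u => ¬ wt u = t) with hF'
    have haev : aeval (monGen R n d) p = ∑ u ∈ p.support, monomial (wt u) (coeff u p) := by
      conv_lhs => rw [p.as_sum]
      rw [map_sum]
      exact Finset.sum_congr rfl fun u _ => aeval_monGen_monomial u _
    have hsum : ∑ u ∈ F, coeff u p = 0 := by
      have h2 : coeff t (aeval (monGen R n d) p) = ∑ u ∈ F, coeff u p := by
        rw [haev, coeff_sum, hF, Finset.sum_filter]
        exact Finset.sum_congr rfl fun u _ => by rw [coeff_monomial]
      rw [hker] at h2
      simpa using h2.symm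
    set q := ∑ u ∈ F, C (coeff u p) * (monomial u (1:R) - monomial u0 1) with hq
    have hqI : q ∈ minors2 (monMatrix R n d hd) := by
      apply Ideal.sum_mem
      intro u hu
      exact Ideal.mul_mem_left _ _
        (binomial_mem hd (dg u) u u0 rfl ((Finset.mem_filter.mp hu).2))
    have hqval : q = ∑ u ∈ F, monomial u (coeff u p) := by
      rw [hq]
      have : ∀ u ∈ F, C (coeff u p) * (monomial u (1:R) - monomial u0 1)
          = monomial u (coeff u p) - monomial u0 (coeff u p) := by
        intro u _
        rw [mul_sub, C_mul_monomial, C_mul_monomial, mul_one]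
      rw [Finset.sum_congr rfl this, Finset.sum_sub_distrib]
      rw [← map_sum (monomial u0) (fun u => coeff u p) F, hsum, map_zero, sub_zero]
    have hpq : p - q = ∑ u ∈ F', monomial u (coeff u p) := by
      have hps : p = ∑ u ∈ F, monomial u (coeff u p) + ∑ u ∈ F', monomial u (coeff u p) := by
        rw [hF, hF', Finset.sum_filter_add_sum_filter_not]
        exact p.as_sum
      rw [hqval]
      exact sub_eq_of_eq_add' hps
    have hq0 : aeval (monGen R n d) q = 0 := by
      rw [hq, map_sum]
      apply Finset.sum_eq_zero
      intro u hu
      rw [map_mul, map_sub, aeval_monGen_monomial, aeval_monGen_monomial,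
        (Finset.mem_filter.mp hu).2, sub_self, mul_zero]
    have hpq_supp : (p - q).support ⊆ F' := by
      rw [hpq]
      refine (support_sum).trans ?_
      intro x hx
      obtain ⟨u, hu, hxu⟩ := Finset.mem_biUnion.mp hx
      have := support_monomial (s := u) (a := coeff u p) ▸ hxu
      by_cases hc : coeff u p = 0
      · simp [hc] at this
      · simp [hc] at this
        rwa [this]
    have hcard' : (p - q).support.card ≤ N := by
      have h1 : F' ⊆ p.support.erase u0 := by
        rw [Finset.subset_erase]
        constructor
        · exact Finset.filter_subset _ _
        · intro hmem
          exact (Finset.mem_filter.mp hmem).2 ht.symm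
      have h2 : (p.support.erase u0).card = p.support.card - 1 :=
        Finset.card_erase_of_mem hu0
      have h3 := Finset.card_le_card (hpq_supp.trans h1)
      have h4 : 1 ≤ p.support.card := Finset.card_pos.mpr ⟨u0, hu0⟩
      omega
    have hker' : aeval (monGen R n d) (p - q) = 0 := by
      rw [map_sub, hker, hq0, sub_zero]
    have hmem := IH (p - q) hcard' hker'
    have : p = (p - q) + q := by ring
    rw [this]
    exact Ideal.add_mem _ hmem hqI

lemma ker_eq_minors :
    RingHom.ker (aeval (monGen R n d) : MvPolynomial (MonIdx n d) R →ₐ[R] _)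
      = minors2 (monMatrix R n d hd) := by
  apply le_antisymm
  · intro p hp
    exact ker_le_minors hd p.support.card p le_rfl (RingHom.mem_ker.mp hp)
  · exact minors_le_ker hd

/-- `dg u = 1` means `u` is a single variable. -/
lemma eq_single_of_dg_one {α : Type*} {u : α →₀ ℕ} (h : dg u = 1) :
    ∃ a, u = Finsupp.single a 1 := by
  obtain ⟨a, ha⟩ : ∃ a, u a ≠ 0 := exists_apply_ne_zero (by rintro rfl; simp at h)
  refine ⟨a, ?_⟩
  have h1 : Finsupp.single a 1 + (u - Finsupp.single a 1) = u := exists_single_add ha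
  have h2 := congrArg dg h1
  rw [dg_add, dg_single, h] at h2
  have h3 : u - Finsupp.single a 1 = 0 := dg_eq_zero' (by omega)
  rw [← h1, h3, add_zero]

include hd in
/-- injectivity of `wt` on exponents of degree at most one -/
lemma wt_inj_of_dg_le_one {u u' : MonIdx n d →₀ ℕ} (hu : dg u ≤ 1) (hu' : dg u' ≤ 1)
    (hw : wt u = wt u') : u = u' := by
  clear hu'
  have hdeq : dg u = dg u' := by
    have h1 := dg_wt u
    have h2 := dg_wt u'
    rw [hw] at h1
    exact Nat.eq_of_mul_eq_mul_left (show 0 < d from hd) (h1.symm.trans h2)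
  rcases Nat.le_one_iff_eq_zero_or_eq_one.mp hu with h | h
  · rw [dg_eq_zero' h, dg_eq_zero' (hdeq ▸ h : dg u' = 0)]
  · obtain ⟨v, rfl⟩ := eq_single_of_dg_one h
    obtain ⟨v', rfl⟩ := eq_single_of_dg_one (hdeq ▸ h : dg u' = 1)
    have : v = v' := by
      apply Subtype.ext
      have := hw
      rw [wt_single, wt_single, one_smul, one_smul] at this
      exact this
    rw [this]

include hd in
/-- Any element of the kernel of total degree at most one is zero. -/
lemma ker_degree_one_eq_zero {q : MvPolynomial (MonIdx n d) R}
    (hq : aeval (monGen R n d) q = 0) (hdeg : q.totalDegree ≤ 1) : q = 0 := by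
  classical
  ext u
  rw [coeff_zero]
  by_cases hu : u ∈ q.support
  · have haev : aeval (monGen R n d) q = ∑ u' ∈ q.support, monomial (wt u') (coeff u' q) := by
      conv_lhs => rw [q.as_sum]
      rw [map_sum]
      exact Finset.sum_congr rfl fun u' _ => aeval_monGen_monomial u' _
    have h1 : coeff (wt u) (aeval (monGen R n d) q) = coeff u q := by
      rw [haev, coeff_sum]
      rw [Finset.sum_eq_single_of_mem u hu]
      · rw [coeff_monomial, if_pos rfl]
      · intro b hb hbne
        rw [coeff_monomial, if_neg]
        intro hwb
        exact hbne (wt_inj_of_dg_le_one hd ((le_totalDegree hb).trans hdeg)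
          ((le_totalDegree hu).trans hdeg) hwb)
    rw [hq, coeff_zero] at h1
    exact h1.symm
  · exact notMem_support_iff.mp hu

include hd in
lemma relType_eq_two [Nontrivial R] (h2n : 2 ≤ n) (h2d : 2 ≤ d) :
    relType R (monGen R n d) = 2 := by
  classical
  set Q := RingHom.ker (aeval (monGen R n d) :
    MvPolynomial (MonIdx n d) R →ₐ[R] MvPolynomial (Fin n) R) with hQ
  have hQm : Q = minors2 (monMatrix R n d hd) := ker_eq_minors hd
  -- `degLE 2 = Q`
  have hdeg2 : Q.degLE 2 = Q := by
    apply le_antisymm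
    · rw [Ideal.degLE, Ideal.span_le]
      rintro q ⟨hq, _⟩
      exact hq
    · have hle : minors2 (monMatrix R n d hd) ≤ Q.degLE 2 := by
        rw [minors2, Ideal.span_le]
        rintro p ⟨i, k, j, l, rfl⟩
        apply Ideal.subset_span
        refine ⟨by rw [hQm]; exact Ideal.subset_span ⟨i, k, j, l, rfl⟩, ?_⟩
        have hX : ∀ (a b : MonIdx n d),
            ((X a * X b : MvPolynomial (MonIdx n d) R)).totalDegree ≤ 2 := fun a b =>
          (totalDegree_mul _ _).trans (by rw [totalDegree_X, totalDegree_X])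
        have hM : ∀ (i' : Fin n) (j' : MonIdx n (d-1)), ∃ c : MonIdx n d,
            monMatrix R n d hd i' j' = X c := fun i' j' => ⟨_, rfl⟩
        obtain ⟨c1, e1⟩ := hM i j
        obtain ⟨c2, e2⟩ := hM k l
        obtain ⟨c3, e3⟩ := hM i l
        obtain ⟨c4, e4⟩ := hM k j
        rw [e1, e2, e3, e4]
        exact (totalDegree_sub _ _).trans (max_le (hX _ _) (hX _ _))
      exact le_trans (le_of_eq hQm) hle
  -- `degLE 1 = ⊥`
  have hdeg1 : Q.degLE 1 = ⊥ := by
    rw [Ideal.degLE]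
    refine le_antisymm ?_ bot_le
    rw [Ideal.span_le]
    rintro q ⟨hq, hdegq⟩
    rw [SetLike.mem_coe, Ideal.mem_bot]
    exact ker_degree_one_eq_zero hd (RingHom.mem_ker.mp hq) hdegq
  -- a nonzero element of `Q`
  have h0n : (0 : ℕ) < n := by omega
  have h1n : (1 : ℕ) < n := by omega
  set i0 : Fin n := ⟨0, h0n⟩ with hi0
  set i1 : Fin n := ⟨1, h1n⟩ with hi1
  have hi01 : i0 ≠ i1 := by
    intro h
    have h' : (0 : ℕ) = 1 := congrArg Fin.val h
    omega
  set v1 : MonIdx n d := ⟨Finsupp.single i0 d, by show dg _ = d; rw [dg_single]⟩ with hv1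
  set v2 : MonIdx n d := ⟨Finsupp.single i0 (d-2) + Finsupp.single i1 2, by
    show dg _ = d; rw [dg_add, dg_single, dg_single]; omega⟩ with hv2
  set v3 : MonIdx n d := ⟨Finsupp.single i0 (d-1) + Finsupp.single i1 1, by
    show dg _ = d; rw [dg_add, dg_single, dg_single]; omega⟩ with hv3
  set q0 : MvPolynomial (MonIdx n d) R :=
    monomial (Finsupp.single v1 1 + Finsupp.single v2 1) 1 - monomial (Finsupp.single v3 2) 1
    with hq0def
  have hexp : v1.1 + v2.1 = 2 • v3.1 := by
    ext j
    rw [Finsupp.add_apply, Finsupp.smul_apply, smul_eq_mul, hv1, hv2, hv3]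
    show Finsupp.single i0 d j + ((Finsupp.single i0 (d-2) + Finsupp.single i1 2 : Fin n →₀ ℕ)) j
      = 2 * ((Finsupp.single i0 (d-1) + Finsupp.single i1 1 : Fin n →₀ ℕ)) j
    rw [Finsupp.add_apply, Finsupp.add_apply, Finsupp.single_apply, Finsupp.single_apply,
      Finsupp.single_apply, Finsupp.single_apply, Finsupp.single_apply]
    have : i0 ≠ i1 := hi01
    split_ifs with ha hb hb
    · exact absurd (ha.trans hb.symm) this
    · omega
    · omega
    · omega
  have hq0Q : q0 ∈ Q := by
    rw [hQ, RingHom.mem_ker, hq0def, map_sub, aeval_monGen_monomial, aeval_monGen_monomial,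
      wt_add, wt_single, wt_single, one_smul, one_smul, wt_single, hexp, sub_self]
  have e11 : v1.1 i1 = 0 := by
    rw [hv1]; show Finsupp.single i0 d i1 = 0
    rw [Finsupp.single_apply, if_neg hi01]
  have e21 : v2.1 i1 = 2 := by
    rw [hv2]; show ((Finsupp.single i0 (d-2) + Finsupp.single i1 2 : Fin n →₀ ℕ)) i1 = 2
    rw [Finsupp.add_apply, Finsupp.single_apply, if_neg hi01, Finsupp.single_apply, if_pos rfl]
  have e31 : v3.1 i1 = 1 := by
    rw [hv3]; show ((Finsupp.single i0 (d-1) + Finsupp.single i1 1 : Fin n →₀ ℕ)) i1 = 1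
    rw [Finsupp.add_apply, Finsupp.single_apply, if_neg hi01, Finsupp.single_apply, if_pos rfl]
  have hv13 : v1 ≠ v3 := fun h => by
    rw [h, e31] at e11; exact one_ne_zero e11
  have hv23 : v2 ≠ v3 := fun h => by
    rw [h, e31] at e21; exact absurd e21 (by norm_num)
  have hne : Finsupp.single v3 2 ≠ Finsupp.single v1 1 + Finsupp.single v2 1 := by
    intro h
    have h2' := DFunLike.congr_fun h v3
    rw [Finsupp.add_apply, Finsupp.single_apply, Finsupp.single_apply, Finsupp.single_apply,
      if_pos rfl, if_neg hv13, if_neg hv23] at h2'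
    omega
  have hq0ne : q0 ≠ 0 := by
    intro h
    have h3' := congrArg (coeff (Finsupp.single v1 1 + Finsupp.single v2 1)) h
    rw [hq0def, coeff_sub, coeff_monomial, if_pos rfl, coeff_monomial, if_neg hne,
      coeff_zero, sub_zero] at h3'
    exact one_ne_zero h3'
  have hQne : Q ≠ ⊥ := fun h => hq0ne (Ideal.mem_bot.mp (h ▸ hq0Q))
  -- conclude
  show relTypeKer Q = 2
  rw [relTypeKer]
  apply le_antisymm
  · exact Nat.sInf_le ⟨one_le_two, hdeg2⟩
  · refine le_csInf ⟨2, one_le_two, hdeg2⟩ ?_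
    rintro m ⟨h1m, hm⟩
    by_contra hlt
    push_neg at hlt
    have hm1 : m = 1 := by omega
    subst hm1
    rw [hdeg1] at hm
    exact hQne hm.symm

end exch

end Ver

/-- Let `S = R[x_1,…,x_n]` be a polynomial ring over a commutative
Noetherian ring `R`, let `d ≥ 1`, and let `A = R[Mon^d(S)]` be the standard graded
`R`-algebra generated (in degree one) by all monomials of degree `d` in `S`.  Then the
kernel `Q` of the polynomial presentation sending the variable indexed by a degree-`d`
monomial to that monomial equals the ideal `I_2(M)` of `2 × 2` minors of the matrix `M`
whose `(i,j)` entry is the variable corresponding to `x_i · m_j` (`m_j` the degree-`(d-1)`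
monomials); in particular `rt_R(A) = 2` when `n ≥ 2` and `d ≥ 2`. -/
theorem relation_type_statement_8
    {R : Type*} [CommRing R] [IsNoetherianRing R] [Nontrivial R]
    (n d : ℕ) (hd : 1 ≤ d) :
    RingHom.ker
        (MvPolynomial.aeval (monGen R n d) :
          MvPolynomial (MonIdx n d) R →ₐ[R] MvPolynomial (Fin n) R)
      = minors2 (monMatrix R n d hd)
    ∧ (2 ≤ n → 2 ≤ d → relType R (monGen R n d) = 2) := by
  exact ⟨Ver.ker_eq_minors hd, fun h2n h2d => Ver.relType_eq_two hd h2n h2d⟩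
end

section
/- Let R be a commutative Noetherian ring and I an ideal of R. Then the relation type of the Rees algebra of I equals the relation type of the associated graded ring of I: rt_R(R(I)) = rt_{R/I}(gr_I(R)). -/
open MvPolynomial Polynomial

namespace RelType9

variable {R : Type*} [CommRing R] {m : ℕ}

/-- The presentation map of the Rees algebra. -/
noncomputable def Φ (g : Fin m → R) : MvPolynomial (Fin m) R →ₐ[R] Polynomial R :=
  MvPolynomial.aeval (fun i => Polynomial.C (g i) * Polynomial.X)

section Finsupp_helpers

lemma deg_add (a b : Fin m →₀ ℕ) : (a + b).degree = a.degree + b.degree := by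
  simp [Finsupp.degree_eq_weight_one, map_add]

lemma deg_single (j : Fin m) : (Finsupp.single j (1:ℕ)).degree = 1 := by
  rw [Finsupp.degree_apply, Finsupp.support_single_ne_zero j one_ne_zero, Finset.sum_singleton,
    Finsupp.single_eq_same]

lemma sub_add_single {α : Fin m →₀ ℕ} {j : Fin m} (hj : j ∈ α.support) :
    (α - Finsupp.single j 1) + Finsupp.single j 1 = α := by
  have hj' : α j ≠ 0 := Finsupp.mem_support_iff.mp hj
  ext i
  simp only [Finsupp.add_apply, Finsupp.tsub_apply, Finsupp.single_apply]
  by_cases h : j = i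
  · subst h; simp; omega
  · simp [h]

lemma deg_sub_single {α : Fin m →₀ ℕ} {j : Fin m} (hj : j ∈ α.support) :
    (α - Finsupp.single j 1).degree + 1 = α.degree := by
  conv_rhs => rw [← sub_add_single hj]
  rw [deg_add, deg_single]

lemma prod_sub_single (g : Fin m → R) {α : Fin m →₀ ℕ} {j : Fin m} (hj : j ∈ α.support) :
    (α - Finsupp.single j 1).prod (fun i e => g i ^ e) * g j = α.prod (fun i e => g i ^ e) := by
  conv_rhs => rw [← sub_add_single hj]
  rw [Finsupp.prod_add_index' (fun i => pow_zero (g i)) (fun i e1 e2 => pow_add (g i) e1 e2),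
    Finsupp.prod]
  congr 1
  rw [Finsupp.prod, Finsupp.support_single_ne_zero j one_ne_zero, Finset.prod_singleton,
    Finsupp.single_eq_same, pow_one]

end Finsupp_helpers

section basic

variable (g : Fin m → R)

lemma phi_monomial (α : Fin m →₀ ℕ) (a : R) :
    Φ g (monomial α a) =
      Polynomial.C (a * α.prod fun i e => g i ^ e) * Polynomial.X ^ α.degree := by
  rw [Φ, MvPolynomial.aeval_monomial, Polynomial.algebraMap_eq]
  have : (α.prod fun i k => (Polynomial.C (g i) * Polynomial.X) ^ k)
      = Polynomial.C (α.prod fun i e => g i ^ e) * Polynomial.X ^ α.degree := by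
    rw [Finsupp.prod, Finsupp.prod]
    simp_rw [mul_pow, ← Polynomial.C_pow]
    rw [Finset.prod_mul_distrib, ← map_prod, Finset.prod_pow_eq_pow_sum, Finsupp.degree_apply]
  rw [this, map_mul, mul_assoc]

lemma hc_monomial (d : ℕ) (α : Fin m →₀ ℕ) (a : R) :
    homogeneousComponent d (monomial α a) =
      if α.degree = d then monomial α a else 0 := by
  ext β
  rw [coeff_homogeneousComponent]
  by_cases hβ : α = β
  · subst hβ; split_ifs <;> simp_all [MvPolynomial.coeff_monomial]
  · split_ifs <;> simp [MvPolynomial.coeff_monomial, hβ]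

lemma phi_hc (p : MvPolynomial (Fin m) R) (d : ℕ) :
    Φ g (homogeneousComponent d p) =
      Polynomial.C ((Φ g p).coeff d) * Polynomial.X ^ d := by
  induction p using MvPolynomial.induction_on' with
  | monomial α a =>
    rw [hc_monomial, phi_monomial]
    by_cases hd : α.degree = d
    · rw [if_pos hd, phi_monomial, Polynomial.coeff_C_mul, Polynomial.coeff_X_pow,
        if_pos hd.symm, hd, mul_one]
    · rw [if_neg hd, map_zero, Polynomial.coeff_C_mul, Polynomial.coeff_X_pow,
        if_neg (fun h => hd h.symm), mul_zero, Polynomial.C_0, zero_mul]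
  | add p q hp hq =>
    rw [map_add, map_add, map_add, Polynomial.coeff_add, Polynomial.C_add, add_mul, hp, hq]

lemma hc_ker {p : MvPolynomial (Fin m) R} (hp : Φ g p = 0) (d : ℕ) :
    Φ g (homogeneousComponent d p) = 0 := by
  rw [phi_hc, hp, Polynomial.coeff_zero, Polynomial.C_0, zero_mul]

lemma constCoeff_ker {p : MvPolynomial (Fin m) R} (hp : Φ g p = 0) :
    MvPolynomial.coeff 0 p = 0 := by
  have h0 := hc_ker g hp 0
  rw [homogeneousComponent_zero] at h0
  have : Polynomial.C (MvPolynomial.coeff 0 p) = 0 := by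
    rw [← h0, Φ, MvPolynomial.aeval_C, Polynomial.algebraMap_eq]
  exact Polynomial.C_eq_zero.mp this

lemma hc_map {S : Type*} [CommRing S] (f : R →+* S) (p : MvPolynomial (Fin m) R) (d : ℕ) :
    MvPolynomial.map f (homogeneousComponent d p) =
      homogeneousComponent d (MvPolynomial.map f p) := by
  induction p using MvPolynomial.induction_on' with
  | monomial α a =>
    rw [MvPolynomial.map_monomial, hc_monomial, hc_monomial]
    split_ifs with h
    · rw [MvPolynomial.map_monomial]
    · rw [map_zero]
  | add p q hp hq => simp only [map_add, hp, hq]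

end basic

section low

variable (g : Fin m → R)

open Classical in
/-- Choice of a variable occurring in a nonzero exponent vector. -/
noncomputable def pick (α : Fin m →₀ ℕ) (h : α ≠ 0) : Fin m :=
  α.support.min' (Finsupp.support_nonempty_iff.mpr h)

lemma pick_mem (α : Fin m →₀ ℕ) (h : α ≠ 0) : pick α h ∈ α.support :=
  α.support.min'_mem _

open Classical in
/-- The "lowering" linear map, replacing one variable of each MvPolynomial.monomial by the
corresponding generator. -/
noncomputable def low : MvPolynomial (Fin m) R →ₗ[R] MvPolynomial (Fin m) R :=
  (MvPolynomial.basisMonomials (Fin m) R).constr R fun α =>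
    if h : α = 0 then 0
    else MvPolynomial.monomial (α - Finsupp.single (pick α h) 1) (g (pick α h))

lemma low_monomial (α : Fin m →₀ ℕ) (a : R) :
    low g (MvPolynomial.monomial α a) =
      if h : α = 0 then 0
      else MvPolynomial.monomial (α - Finsupp.single (pick α h) 1) (a * g (pick α h)) := by
  have : (MvPolynomial.monomial α a : MvPolynomial (Fin m) R)
      = a • (MvPolynomial.basisMonomials (Fin m) R α) := by
    rw [MvPolynomial.coe_basisMonomials]
    rw [MvPolynomial.smul_monomial, smul_eq_mul, mul_one]
  rw [this, map_smul, low, Module.Basis.constr_basis]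
  split_ifs with h
  · rw [smul_zero]
  · rw [MvPolynomial.smul_monomial, smul_eq_mul]

lemma low_monomial_ne (α : Fin m →₀ ℕ) (a : R) (h : α ≠ 0) :
    low g (MvPolynomial.monomial α a) =
      MvPolynomial.monomial (α - Finsupp.single (pick α h) 1) (a * g (pick α h)) := by
  rw [low_monomial, dif_neg h]

/-- The ideal of `Q` generated by the degree-one "swap" relations. -/
noncomputable def Sw : Ideal (MvPolynomial (Fin m) R) :=
  Ideal.span {f | ∃ u v, f = MvPolynomial.C (g u) * MvPolynomial.X v
      - MvPolynomial.C (g v) * MvPolynomial.X u}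

lemma CX_eq (u v : Fin m) :
    MvPolynomial.C (g u) * (MvPolynomial.X v : MvPolynomial (Fin m) R)
      = MvPolynomial.monomial (Finsupp.single v 1) (g u) := by
  rw [MvPolynomial.X, MvPolynomial.C_mul_monomial, mul_one]

lemma swap_mem (β : Fin m →₀ ℕ) (a : R) (u v : Fin m)
    (hu : u ∈ β.support) (hv : v ∈ β.support) :
    MvPolynomial.monomial (β - Finsupp.single u 1) (a * g u)
      - MvPolynomial.monomial (β - Finsupp.single v 1) (a * g v) ∈ Sw g := by
  by_cases huv : u = v
  · subst huv; rw [sub_self]; exact zero_mem _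
  have hβu : β u ≠ 0 := Finsupp.mem_support_iff.mp hu
  have hβv : β v ≠ 0 := Finsupp.mem_support_iff.mp hv
  have hv' : v ∈ (β - Finsupp.single u 1).support := by
    rw [Finsupp.mem_support_iff, Finsupp.tsub_apply, Finsupp.single_apply, if_neg huv]
    omega
  have hu' : u ∈ (β - Finsupp.single v 1).support := by
    rw [Finsupp.mem_support_iff, Finsupp.tsub_apply, Finsupp.single_apply,
      if_neg (Ne.symm huv)]
    omega
  have comm : β - Finsupp.single u 1 - Finsupp.single v 1
      = β - Finsupp.single v 1 - Finsupp.single u 1 := by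
    ext i
    simp only [Finsupp.tsub_apply]
    omega
  have e1 := sub_add_single hv'
  have e2 := sub_add_single hu'
  have key : MvPolynomial.monomial (β - Finsupp.single u 1 - Finsupp.single v 1) a *
      (MvPolynomial.C (g u) * MvPolynomial.X v - MvPolynomial.C (g v) * MvPolynomial.X u)
      = MvPolynomial.monomial (β - Finsupp.single u 1) (a * g u)
        - MvPolynomial.monomial (β - Finsupp.single v 1) (a * g v) := by
    rw [mul_sub, CX_eq, CX_eq, MvPolynomial.monomial_mul, MvPolynomial.monomial_mul, e1, comm, e2]
  rw [← key]
  exact Ideal.mul_mem_left _ _ (Ideal.subset_span ⟨u, v, rfl⟩)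

lemma swap_le_ker : Sw g ≤ RingHom.ker (Φ g) := by
  rw [Sw, Ideal.span_le]
  rintro f ⟨u, v, rfl⟩
  simp only [SetLike.mem_coe, RingHom.mem_ker, map_sub, map_mul]
  rw [Φ]
  simp only [MvPolynomial.aeval_C, MvPolynomial.aeval_X, Polynomial.algebraMap_eq]
  ring

lemma tdeg_monomial_le (α : Fin m →₀ ℕ) (a : R) :
    (MvPolynomial.monomial α a : MvPolynomial (Fin m) R).totalDegree ≤ α.degree := by
  rw [MvPolynomial.totalDegree]
  apply Finset.sup_le
  intro β hβ
  have := MvPolynomial.support_monomial_subset hβ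
  rw [Finset.mem_singleton] at this
  subst this
  exact le_of_eq rfl

lemma swap_le_degLE {n : ℕ} (hn : 1 ≤ n) : Sw g ≤ (RingHom.ker (Φ g)).degLE n := by
  rw [Sw, Ideal.span_le]
  rintro f ⟨u, v, rfl⟩
  apply Ideal.subset_span
  constructor
  · exact swap_le_ker g (Ideal.subset_span ⟨u, v, rfl⟩)
  · rw [CX_eq, CX_eq]
    refine le_trans (MvPolynomial.totalDegree_sub _ _) ?_
    have h1 : ∀ (w w' : Fin m),
        (MvPolynomial.monomial (Finsupp.single w 1) (g w')).totalDegree ≤ n :=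
      fun w w' => le_trans (tdeg_monomial_le _ _) (by rw [deg_single]; exact hn)
    exact max_le (h1 v u) (h1 u v)

end low

section lowlemmas

variable (g : Fin m → R)

lemma deg_eq_sum (α : Fin m →₀ ℕ) : (α.sum fun _ e => e) = α.degree := rfl

lemma low_eval (p : MvPolynomial (Fin m) R) :
    Φ g (low g p) * Polynomial.X = Φ g p - Polynomial.C (MvPolynomial.coeff 0 p) := by
  induction p using MvPolynomial.induction_on' with
  | monomial α a =>
    by_cases h : α = 0
    · subst h
      rw [low_monomial, dif_pos rfl, map_zero, zero_mul, phi_monomial]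
      simp [MvPolynomial.coeff_monomial, map_zero]
    · rw [low_monomial_ne g α a h, phi_monomial, phi_monomial,
        MvPolynomial.coeff_monomial, if_neg h, map_zero, sub_zero]
      have hj := pick_mem α h
      have hp := prod_sub_single g hj
      have hd := deg_sub_single hj
      have hcoef : a * g (pick α h) *
          ((α - Finsupp.single (pick α h) 1).prod fun i e => g i ^ e)
          = a * α.prod fun i e => g i ^ e := by
        rw [mul_assoc, mul_comm (g (pick α h)), hp]
      rw [mul_assoc, ← pow_succ, hcoef, hd]
  | add p q hp hq =>
    simp only [map_add, MvPolynomial.coeff_add, Polynomial.C_add, add_mul, hp, hq]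
    ring

lemma low_mem_ker {p : MvPolynomial (Fin m) R} (hp : Φ g p = 0) : Φ g (low g p) = 0 := by
  have h0 : Φ g (low g p) * Polynomial.X = 0 := by
    rw [low_eval, hp, constCoeff_ker g hp, Polynomial.C_0, sub_zero]
  ext n
  rw [← Polynomial.coeff_mul_X, h0, Polynomial.coeff_zero, Polynomial.coeff_zero]

lemma low_apply_sum (p : MvPolynomial (Fin m) R) :
    low g p = ∑ α ∈ p.support,
      low g (MvPolynomial.monomial α (MvPolynomial.coeff α p)) := by
  conv_lhs => rw [MvPolynomial.as_sum p]
  rw [map_sum]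

lemma low_totalDegree (p : MvPolynomial (Fin m) R) (d : ℕ) (h : p.totalDegree ≤ d + 1) :
    (low g p).totalDegree ≤ d := by
  rw [low_apply_sum]
  refine le_trans (MvPolynomial.totalDegree_finset_sum _ _) ?_
  apply Finset.sup_le
  intro α hα
  by_cases h0 : α = 0
  · rw [low_monomial, dif_pos h0, MvPolynomial.totalDegree_zero]
    exact Nat.zero_le _
  · rw [low_monomial_ne g _ _ h0]
    refine le_trans (tdeg_monomial_le _ _) ?_
    have hd := deg_sub_single (pick_mem α h0)
    have hα' : α.degree ≤ d + 1 := by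
      rw [← deg_eq_sum]
      exact le_trans (MvPolynomial.le_totalDegree hα) h
    omega

lemma low_mul_mono_mono (γ α : Fin m →₀ ℕ) (c a : R) (hα : α ≠ 0) :
    low g (MvPolynomial.monomial γ c * MvPolynomial.monomial α a)
      - MvPolynomial.monomial γ c * low g (MvPolynomial.monomial α a) ∈ Sw g := by
  have hga : γ + α ≠ 0 := by
    intro hh
    apply hα
    ext i
    have := congrArg (fun f : Fin m →₀ ℕ => f i) hh
    simp only [Finsupp.add_apply, Finsupp.coe_zero, Pi.zero_apply] at this ⊢
    omega
  have h1 : α (pick α hα) ≠ 0 := Finsupp.mem_support_iff.mp (pick_mem α hα)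
  rw [MvPolynomial.monomial_mul, low_monomial_ne g _ _ hga, low_monomial_ne g α a hα,
    MvPolynomial.monomial_mul]
  have hj2 : pick α hα ∈ (γ + α).support := by
    rw [Finsupp.mem_support_iff, Finsupp.add_apply]
    omega
  have e3 : γ + (α - Finsupp.single (pick α hα) 1)
      = (γ + α) - Finsupp.single (pick α hα) 1 := by
    ext i
    simp only [Finsupp.add_apply, Finsupp.tsub_apply, Finsupp.single_apply]
    by_cases hc : pick α hα = i
    · subst hc
      split_ifs with h2
      · omega
      · exact absurd rfl h2
    · split_ifs
      omega
  rw [e3, ← mul_assoc c a]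
  exact swap_mem g (γ + α) (c * a) _ _ (pick_mem _ hga) hj2

lemma low_mul_mono (γ : Fin m →₀ ℕ) (c : R) (p : MvPolynomial (Fin m) R)
    (hp : MvPolynomial.coeff 0 p = 0) :
    low g (MvPolynomial.monomial γ c * p)
      - MvPolynomial.monomial γ c * low g p ∈ Sw g := by
  have e1 : MvPolynomial.monomial γ c * p = ∑ α ∈ p.support,
      MvPolynomial.monomial γ c * MvPolynomial.monomial α (MvPolynomial.coeff α p) := by
    rw [← Finset.mul_sum, ← MvPolynomial.as_sum]
  rw [e1, map_sum, low_apply_sum g p, Finset.mul_sum, ← Finset.sum_sub_distrib]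
  refine sum_mem fun α hα => low_mul_mono_mono g γ α c _ ?_
  intro h0
  subst h0
  exact (Finsupp.mem_support_iff.mp hα) hp

lemma low_mul (b p : MvPolynomial (Fin m) R) (hp : MvPolynomial.coeff 0 p = 0) :
    low g (b * p) - b * low g p ∈ Sw g := by
  have e1 : b * p = ∑ γ ∈ b.support,
      MvPolynomial.monomial γ (MvPolynomial.coeff γ b) * p := by
    rw [← Finset.sum_mul, ← MvPolynomial.as_sum]
  have e2 : b * low g p = ∑ γ ∈ b.support,
      MvPolynomial.monomial γ (MvPolynomial.coeff γ b) * low g p := by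
    rw [← Finset.sum_mul, ← MvPolynomial.as_sum]
  rw [e1, map_sum, e2, ← Finset.sum_sub_distrib]
  exact sum_mem fun γ _ => low_mul_mono g γ _ p hp

lemma raise : ∀ x ∈ Ideal.span {f : MvPolynomial (Fin m) R | ∃ u, f = MvPolynomial.C (g u)},
    ∃ H : MvPolynomial (Fin m) R, MvPolynomial.coeff 0 H = 0 ∧
      Φ g H = Polynomial.X * Φ g x ∧ x - low g H ∈ Sw g := by
  intro x hx
  induction hx using Submodule.span_induction with
  | mem x hx =>
    obtain ⟨u, rfl⟩ := hx
    refine ⟨MvPolynomial.X u, ?_, ?_, ?_⟩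
    · rw [show (MvPolynomial.X u : MvPolynomial (Fin m) R)
          = MvPolynomial.monomial (Finsupp.single u 1) 1 from rfl,
        MvPolynomial.coeff_monomial,
        if_neg (fun hh => one_ne_zero (Finsupp.single_eq_zero.mp hh))]
    · rw [Φ]
      simp only [MvPolynomial.aeval_C, MvPolynomial.aeval_X, Polynomial.algebraMap_eq]
      ring
    · have hXu : (MvPolynomial.X u : MvPolynomial (Fin m) R)
          = MvPolynomial.monomial (Finsupp.single u 1) 1 := rfl
      have hs : Finsupp.single u 1 ≠ (0 : Fin m →₀ ℕ) :=
        fun hh => one_ne_zero (Finsupp.single_eq_zero.mp hh)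
      rw [hXu, low_monomial_ne g _ _ hs]
      have hpick : pick (Finsupp.single u 1) hs = u := by
        have := pick_mem (Finsupp.single u 1) hs
        rw [Finsupp.support_single_ne_zero u one_ne_zero, Finset.mem_singleton] at this
        exact this
      rw [hpick, tsub_self, one_mul,
        show MvPolynomial.monomial (0 : Fin m →₀ ℕ) (g u) = MvPolynomial.C (g u) from rfl,
        sub_self]
      exact zero_mem _
  | zero =>
    exact ⟨0, by simp, by simp, by rw [map_zero, sub_zero]; exact zero_mem _⟩
  | add x y hx hy ihx ihy =>
    obtain ⟨H1, h10, h1e, h1s⟩ := ihx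
    obtain ⟨H2, h20, h2e, h2s⟩ := ihy
    refine ⟨H1 + H2, ?_, ?_, ?_⟩
    · rw [MvPolynomial.coeff_add, h10, h20, add_zero]
    · rw [map_add, map_add, mul_add, h1e, h2e]
    · have : x + y - low g (H1 + H2) = (x - low g H1) + (y - low g H2) := by
        rw [map_add]; ring
      rw [this]
      exact add_mem h1s h2s
  | smul b x hx ih =>
    obtain ⟨H, h0, he, hs⟩ := ih
    refine ⟨b * H, ?_, ?_, ?_⟩
    · have hmul : MvPolynomial.constantCoeff (b * H)
          = MvPolynomial.constantCoeff b * MvPolynomial.constantCoeff H := map_mul _ _ _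
      have h0' : MvPolynomial.constantCoeff H = 0 := h0
      show MvPolynomial.constantCoeff (b * H) = 0
      rw [hmul, h0', mul_zero]
    · rw [smul_eq_mul, map_mul, map_mul, he]
      ring
    · have h1 : b • x - low g (b * H)
          = b * (x - low g H) - (low g (b * H) - b * low g H) := by
        rw [smul_eq_mul]; ring
      rw [h1]
      exact sub_mem (Ideal.mul_mem_left _ _ hs) (low_mul g b H h0)

lemma spanLow {n : ℕ} (hn : 1 ≤ n) :
    ∀ x ∈ Ideal.span {q : MvPolynomial (Fin m) R |
        q ∈ RingHom.ker (Φ g) ∧ q.totalDegree ≤ n + 1},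
      low g x ∈ (RingHom.ker (Φ g)).degLE n := by
  intro x hx
  induction hx using Submodule.span_induction with
  | mem q hq =>
    exact Ideal.subset_span
      ⟨RingHom.mem_ker.mpr (low_mem_ker g (RingHom.mem_ker.mp hq.1)),
        low_totalDegree g _ n hq.2⟩
  | zero => rw [map_zero]; exact zero_mem _
  | add x y hx hy ihx ihy => rw [map_add]; exact add_mem ihx ihy
  | smul b x hx ih =>
    have hxker : Φ g x = 0 :=
      RingHom.mem_ker.mp ((Ideal.span_le.mpr (fun q hq => hq.1)) hx)
    have hx0 : MvPolynomial.coeff 0 x = 0 := constCoeff_ker g hxker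
    have h2 : low g (b • x) = b * low g x + (low g (b * x) - b * low g x) := by
      rw [smul_eq_mul]; ring
    rw [h2]
    exact add_mem (Ideal.mul_mem_left _ _ ih) (swap_le_degLE g hn (low_mul g b x hx0))

end lowlemmas

section final

variable (g : Fin m → R)

/-- Truncation below degree `ℓ`. -/
noncomputable def trunc (ℓ : ℕ) (p : MvPolynomial (Fin m) R) : MvPolynomial (Fin m) R :=
  ∑ d ∈ Finset.range (ℓ + 1), homogeneousComponent d p

lemma trunc_eq_self {ℓ : ℕ} {p : MvPolynomial (Fin m) R} (h : p.totalDegree ≤ ℓ) :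
    trunc ℓ p = p := by
  rw [trunc]
  conv_rhs => rw [← MvPolynomial.sum_homogeneousComponent p]
  refine (Finset.sum_subset ?_ ?_).symm
  · exact Finset.range_subset_range.mpr (by omega)
  · intro d hd hnd
    rw [Finset.mem_range] at hd
    rw [Finset.mem_range, not_lt] at hnd
    exact homogeneousComponent_eq_zero d p (by omega)

lemma trunc_deg (ℓ : ℕ) (p : MvPolynomial (Fin m) R) : (trunc ℓ p).totalDegree ≤ ℓ := by
  refine le_trans (MvPolynomial.totalDegree_finset_sum _ _) ?_
  apply Finset.sup_le
  intro d hd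
  rw [Finset.mem_range] at hd
  exact le_trans ((homogeneousComponent_isHomogeneous d p).totalDegree_le) (by omega)

lemma trunc_ker {p : MvPolynomial (Fin m) R} (h : Φ g p = 0) (ℓ : ℕ) :
    Φ g (trunc ℓ p) = 0 := by
  rw [trunc, map_sum]
  exact Finset.sum_eq_zero fun d _ => hc_ker g h d

lemma trunc_map {S : Type*} [CommRing S] (f : R →+* S) (ℓ : ℕ) (p : MvPolynomial (Fin m) R) :
    MvPolynomial.map f (trunc ℓ p) = trunc ℓ (MvPolynomial.map f p) := by
  rw [trunc, trunc, map_sum]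
  exact Finset.sum_congr rfl fun d _ => hc_map f p d

lemma tdeg_map_le {S : Type*} [CommRing S] (f : R →+* S) (p : MvPolynomial (Fin m) R) :
    (MvPolynomial.map f p).totalDegree ≤ p.totalDegree := by
  rw [MvPolynomial.totalDegree, MvPolynomial.totalDegree]
  exact Finset.sup_mono (MvPolynomial.support_map_subset _ _)

lemma degLE_le {σ : Type*} (Q : Ideal (MvPolynomial σ R)) (n : ℕ) : Q.degLE n ≤ Q :=
  Ideal.span_le.mpr fun _ hq => hq.1

lemma degLE_mono {σ : Type*} (Q : Ideal (MvPolynomial σ R)) {n n' : ℕ} (h : n ≤ n') :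
    Q.degLE n ≤ Q.degLE n' :=
  Ideal.span_mono fun _ hq => ⟨hq.1, hq.2.trans h⟩

variable (I : Ideal R)

lemma mapDegLE (ℓ : ℕ) :
    ((RingHom.ker (Φ g)).map
        (MvPolynomial.map (Ideal.Quotient.mk I) :
          MvPolynomial (Fin m) R →+* MvPolynomial (Fin m) (R ⧸ I))).degLE ℓ
      = ((RingHom.ker (Φ g)).degLE ℓ).map
          (MvPolynomial.map (Ideal.Quotient.mk I)) := by
  have hsurj : Function.Surjective
      (MvPolynomial.map (Ideal.Quotient.mk I) :
        MvPolynomial (Fin m) R →+* MvPolynomial (Fin m) (R ⧸ I)) :=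
    MvPolynomial.map_surjective _ Ideal.Quotient.mk_surjective
  apply le_antisymm
  · rw [Ideal.degLE, Ideal.span_le]
    rintro qb ⟨hqb, hdb⟩
    obtain ⟨q', hq', hmapq⟩ := (Ideal.mem_map_iff_of_surjective _ hsurj).mp hqb
    have hmem : trunc ℓ q' ∈ (RingHom.ker (Φ g)).degLE ℓ :=
      Ideal.subset_span ⟨RingHom.mem_ker.mpr (trunc_ker g (RingHom.mem_ker.mp hq') ℓ),
        trunc_deg ℓ q'⟩
    have : MvPolynomial.map (Ideal.Quotient.mk I) (trunc ℓ q') = qb := by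
      rw [trunc_map, hmapq, trunc_eq_self hdb]
    rw [← this]
    exact Ideal.mem_map_of_mem _ hmem
  · rw [Ideal.degLE, Ideal.map_span, Ideal.span_le]
    rintro qb ⟨q, ⟨hq1, hq2⟩, rfl⟩
    exact Ideal.subset_span
      ⟨Ideal.mem_map_of_mem _ hq1, le_trans (tdeg_map_le _ q) hq2⟩

lemma stepDown (hg : Ideal.span (Set.range g) = I) {ℓ n : ℕ} (hℓ : 1 ≤ ℓ) (hn : ℓ ≤ n)
    (Hbar : (((RingHom.ker (Φ g)).map
        (MvPolynomial.map (Ideal.Quotient.mk I))).degLE ℓ)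
      = (RingHom.ker (Φ g)).map (MvPolynomial.map (Ideal.Quotient.mk I)))
    (h1 : (RingHom.ker (Φ g)).degLE (n + 1) = RingHom.ker (Φ g)) :
    (RingHom.ker (Φ g)).degLE n = RingHom.ker (Φ g) := by
  have hsurj : Function.Surjective
      (MvPolynomial.map (Ideal.Quotient.mk I) :
        MvPolynomial (Fin m) R →+* MvPolynomial (Fin m) (R ⧸ I)) :=
    MvPolynomial.map_surjective _ Ideal.Quotient.mk_surjective
  apply le_antisymm (degLE_le _ _)
  intro q hq
  have h2 : MvPolynomial.map (Ideal.Quotient.mk I) q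
      ∈ ((RingHom.ker (Φ g)).degLE ℓ).map (MvPolynomial.map (Ideal.Quotient.mk I)) := by
    rw [← mapDegLE g I ℓ, Hbar]
    exact Ideal.mem_map_of_mem _ hq
  obtain ⟨q₀, hq₀, hmap⟩ := (Ideal.mem_map_iff_of_surjective _ hsurj).mp h2
  have hGQ : q - q₀ ∈ RingHom.ker (Φ g) := sub_mem hq (degLE_le _ _ hq₀)
  have hGI : q - q₀ ∈ Ideal.span {f : MvPolynomial (Fin m) R | ∃ u, f = MvPolynomial.C (g u)} := by
    have hk : q - q₀ ∈ RingHom.ker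
        (MvPolynomial.map (Ideal.Quotient.mk I) :
          MvPolynomial (Fin m) R →+* MvPolynomial (Fin m) (R ⧸ I)) := by
      rw [RingHom.mem_ker, map_sub, hmap, sub_self]
    rw [MvPolynomial.ker_map, Ideal.mk_ker, ← hg, Ideal.map_span] at hk
    have hset : (MvPolynomial.C : R →+* MvPolynomial (Fin m) R) '' Set.range g
        = {f : MvPolynomial (Fin m) R | ∃ u, f = MvPolynomial.C (g u)} := by
      ext f
      constructor
      · rintro ⟨y, ⟨u, rfl⟩, rfl⟩; exact ⟨u, rfl⟩
      · rintro ⟨u, rfl⟩; exact ⟨g u, ⟨u, rfl⟩, rfl⟩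
    rwa [hset] at hk
  obtain ⟨H, hH0, hHe, hHs⟩ := raise g _ hGI
  have hHQ : H ∈ RingHom.ker (Φ g) := by
    rw [RingHom.mem_ker] at hGQ ⊢
    rw [hHe, hGQ, mul_zero]
  have hlow : low g H ∈ (RingHom.ker (Φ g)).degLE n := by
    refine spanLow g (le_trans hℓ hn) H ?_
    rw [show Ideal.span {p : MvPolynomial (Fin m) R |
        p ∈ RingHom.ker (Φ g) ∧ p.totalDegree ≤ n + 1}
      = (RingHom.ker (Φ g)).degLE (n + 1) from rfl, h1]
    exact hHQ
  have hsplit : q = q₀ + ((q - q₀ - low g H) + low g H) := by ring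
  rw [hsplit]
  exact add_mem (degLE_mono _ hn hq₀)
    (add_mem (swap_le_degLE g (le_trans hℓ hn) hHs) hlow)

lemma exists_degLE [IsNoetherianRing R] (ℓ₀ : ℕ) :
    ∃ L, ℓ₀ ≤ L ∧ (RingHom.ker (Φ g)).degLE L = RingHom.ker (Φ g) := by
  obtain ⟨s, hs⟩ := IsNoetherian.noetherian (RingHom.ker (Φ g))
  refine ⟨max ℓ₀ (s.sup fun f => f.totalDegree), le_max_left _ _,
    le_antisymm (degLE_le _ _) ?_⟩
  have hle : Ideal.span (↑s : Set (MvPolynomial (Fin m) R))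
      ≤ (RingHom.ker (Φ g)).degLE (max ℓ₀ (s.sup fun f => f.totalDegree)) := by
    rw [Ideal.span_le]
    intro f hf
    exact Ideal.subset_span ⟨hs ▸ Submodule.subset_span hf,
      le_trans (Finset.le_sup hf) (le_max_right _ _)⟩
  exact le_trans (le_of_eq hs.symm) hle

lemma hard [IsNoetherianRing R] (hg : Ideal.span (Set.range g) = I) {ℓ : ℕ} (hℓ : 1 ≤ ℓ)
    (Hbar : (((RingHom.ker (Φ g)).map
        (MvPolynomial.map (Ideal.Quotient.mk I))).degLE ℓ)
      = (RingHom.ker (Φ g)).map (MvPolynomial.map (Ideal.Quotient.mk I))) :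
    (RingHom.ker (Φ g)).degLE ℓ = RingHom.ker (Φ g) := by
  obtain ⟨L, hL1, hL2⟩ := exists_degLE g ℓ
  have key : ∀ k, (RingHom.ker (Φ g)).degLE (ℓ + k) = RingHom.ker (Φ g) →
      (RingHom.ker (Φ g)).degLE ℓ = RingHom.ker (Φ g) := by
    intro k
    induction k with
    | zero => exact fun h => h
    | succ k ih =>
      exact fun h => ih (stepDown g I hg hℓ (Nat.le_add_right ℓ k) Hbar h)
  exact key (L - ℓ) (by rw [Nat.add_sub_cancel' hL1]; exact hL2)

lemma easy {ℓ : ℕ} (h : (RingHom.ker (Φ g)).degLE ℓ = RingHom.ker (Φ g)) :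
    (((RingHom.ker (Φ g)).map
        (MvPolynomial.map (Ideal.Quotient.mk I))).degLE ℓ)
      = (RingHom.ker (Φ g)).map (MvPolynomial.map (Ideal.Quotient.mk I)) := by
  rw [mapDegLE g I ℓ, h]

end final

end RelType9

/-- Let `R` be a commutative Noetherian ring and `I` an ideal of `R`,
generated by `g_1,…,g_m`.  The Rees algebra `R(I) = ⊕ I^n t^n ⊆ R[t]` is presented by
`R[T_1,…,T_m] → R[t]`, `T_i ↦ g_i t`, with kernel `Q`, and the associated graded ring
`gr_I(R) = R(I)/I·R(I)` is presented over `R/I` by `(R/I)[T_1,…,T_m]`, with kernel the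
image `Q̄` of `Q` in `(R/I)[T_1,…,T_m]`.  Then the relation type of the Rees algebra
equals the relation type of the associated graded ring:
`rt_R(R(I)) = rt_{R/I}(gr_I(R))`. -/
theorem relation_type_statement_9
    {R : Type*} [CommRing R] [IsNoetherianRing R] (I : Ideal R)
    {m : ℕ} (g : Fin m → R) (hg : Ideal.span (Set.range g) = I)
    (Q : Ideal (MvPolynomial (Fin m) R))
    (hQ : Q = RingHom.ker
      (MvPolynomial.aeval (fun i => Polynomial.C (g i) * Polynomial.X) :
        MvPolynomial (Fin m) R →ₐ[R] Polynomial R)) :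
    relTypeKer Q = relTypeKer (Q.map (MvPolynomial.map (Ideal.Quotient.mk I))) := by
  have hΦ : (RingHom.ker
      (MvPolynomial.aeval (fun i => Polynomial.C (g i) * Polynomial.X) :
        MvPolynomial (Fin m) R →ₐ[R] Polynomial R)) = RingHom.ker (RelType9.Φ g) := rfl
  subst hQ
  rw [hΦ]
  unfold relTypeKer
  congr 1
  ext ℓ
  simp only [Set.mem_setOf_eq]
  constructor
  · rintro ⟨h1, h2⟩
    exact ⟨h1, RelType9.easy g I h2⟩
  · rintro ⟨h1, h2⟩
    exact ⟨h1, RelType9.hard g I hg h1 h2⟩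
end
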